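/- Let (ℰ,𝓗) be a closed bilinear form on 𝓛 with constants α₀, K and associated resolvent (G_α)_{α>α₀}, and for β > α₀ set ℰ^{(β)}(u,v) := β⟨u − βG_β u, v⟩_𝓛. If u ∈ 𝓛 satisfies limsup_{β→∞} ℰ^{(β)}(u,u) < ∞, then u ∈ 𝓗. -/

import Mathlib

open Filter Topology
open scoped RealInnerProductSpace

noncomputable section

/-- The `𝓗`-norm associated to a bilinear form `E` with constant `α₀`:
`‖u‖_𝓗 = (ℰ^s_{α₀+1}(u,u))^{1/2} = (E(u,u) + (α₀+1)⟨u,u⟩_𝓛)^{1/2}`. -/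
def Hnorm {L : Type*} [NormedAddCommGroup L] [InnerProductSpace ℝ L]
    (E : L → L → ℝ) (α₀ : ℝ) (u : L) : ℝ :=
  Real.sqrt (E u u + (α₀ + 1) * ⟪u, u⟫)

/-- `(ℰ, 𝓗)` is a closed bilinear form on the real Hilbert space `L` with constants
`α₀ ∈ ℝ` and `K ≥ 1`: `𝓗` is a dense subspace, `E` is bilinear on `𝓗`, the symmetric part
`ℰ^s_{α₀}` is positive (hence `ℰ^s_{α₀+1}` is positive definite and dominates the `𝓛`-norm),
`𝓗` is complete for the `𝓗`-norm (ℰ.1), and the weak sector condition (ℰ.2) holds. -/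
structure IsClosedForm {L : Type*} [NormedAddCommGroup L] [InnerProductSpace ℝ L]
    (E : L → L → ℝ) (H : Submodule ℝ L) (α₀ K : ℝ) : Prop where
  one_le_K : 1 ≤ K
  dense_dom : Dense (H : Set L)
  add_left : ∀ u v w : L, u ∈ H → v ∈ H → w ∈ H → E (u + v) w = E u w + E v w
  add_right : ∀ u v w : L, u ∈ H → v ∈ H → w ∈ H → E u (v + w) = E u v + E u w
  smul_left : ∀ (c : ℝ) (u v : L), u ∈ H → v ∈ H → E (c • u) v = c * E u v
  smul_right : ∀ (c : ℝ) (u v : L), u ∈ H → v ∈ H → E u (c • v) = c * E u v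
  nonneg : ∀ u ∈ H, 0 ≤ E u u + α₀ * ⟪u, u⟫
  hilbert : ∀ u : ℕ → L, (∀ n, u n ∈ H) →
      (∀ ε > (0:ℝ), ∃ N : ℕ, ∀ m ≥ N, ∀ n ≥ N, Hnorm E α₀ (u m - u n) < ε) →
      ∃ l ∈ H, Tendsto (fun n => Hnorm E α₀ (u n - l)) atTop (𝓝 0)
  sector : ∀ u ∈ H, ∀ v ∈ H,
      |E u v + (α₀ + 1) * ⟪u, v⟫| ≤ K * Hnorm E α₀ u * Hnorm E α₀ v

/-- `Θ(u) = sup { ℰ_{α₀+1}(v,u) : v ∈ 𝓗, ‖v‖_𝓗 = 1 }`. -/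
def Theta {L : Type*} [NormedAddCommGroup L] [InnerProductSpace ℝ L]
    (E : L → L → ℝ) (H : Submodule ℝ L) (α₀ : ℝ) (u : L) : ℝ :=
  sSup {x : ℝ | ∃ v ∈ H, Hnorm E α₀ v = 1 ∧ x = E v u + (α₀ + 1) * ⟪v, u⟫}

/-- `(G_α)_{α > α₀}` is the resolvent associated to the closed form `(ℰ,𝓗)`:
`G_α(𝓛) ⊆ 𝓗`, `ℰ_α(G_α f, u) = ⟨f,u⟩_𝓛` for all `f ∈ 𝓛`, `u ∈ 𝓗`, the resolvent equation
`G_α − G_β + (α−β) G_α G_β = 0` holds, and `‖(α−α₀) G_α f‖_𝓛 ≤ ‖f‖_𝓛`. -/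
def IsResolventOf {L : Type*} [NormedAddCommGroup L] [InnerProductSpace ℝ L]
    (E : L → L → ℝ) (H : Submodule ℝ L) (α₀ : ℝ) (G : ℝ → L →ₗ[ℝ] L) : Prop :=
  (∀ α, α₀ < α → ∀ f : L, G α f ∈ H) ∧
  (∀ α, α₀ < α → ∀ f : L, ∀ u ∈ H, E (G α f) u + α * ⟪G α f, u⟫ = ⟪f, u⟫) ∧
  (∀ α β, α₀ < α → α₀ < β → ∀ f : L, G α f - G β f + (α - β) • G α (G β f) = 0) ∧
  (∀ α, α₀ < α → ∀ f : L, ‖(α - α₀) • G α f‖ ≤ ‖f‖)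

set_option maxHeartbeats 1000000 in
/-- With `ℰ^{(β)}(u,v) := β ⟨u − β G_β u, v⟩_𝓛` for `β > α₀`:
if `u ∈ 𝓛` satisfies `limsup_{β→∞} ℰ^{(β)}(u,u) < ∞`, then `u ∈ 𝓗`. -/
theorem mem_dom_of_limsup_approx_form
    {L : Type*} [NormedAddCommGroup L] [InnerProductSpace ℝ L] [CompleteSpace L]
    [TopologicalSpace.SeparableSpace L]
    (E : L → L → ℝ) (H : Submodule ℝ L) (α₀ K : ℝ)
    (hcf : IsClosedForm E H α₀ K)
    (G : ℝ → L →ₗ[ℝ] L) (hG : IsResolventOf E H α₀ G)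
    (u : L)
    (hlimsup : Filter.limsup
        (fun β : ℝ => ((β * ⟪u - β • G β u, u⟫ : ℝ) : EReal)) atTop < ⊤) :
    u ∈ H := by
  classical
  obtain ⟨hGmem, hGeq, -, hGbd⟩ := hG
  set Q : L → ℝ := fun w => E w w + (α₀ + 1) * ⟪w, w⟫ with hQdef
  have hinn : ∀ w : L, ⟪w, w⟫ = ‖w‖ ^ 2 := fun w => real_inner_self_eq_norm_sq w
  have hQge : ∀ w ∈ H, ‖w‖ ^ 2 ≤ Q w := by
    intro w hw
    have h0 := hcf.nonneg w hw
    have h1 := hinn w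
    simp only [hQdef]
    nlinarith
  have hQ0 : ∀ w ∈ H, 0 ≤ Q w := fun w hw => le_trans (sq_nonneg _) (hQge w hw)
  have hHnorm : ∀ w : L, Hnorm E α₀ w = Real.sqrt (Q w) := fun w => rfl
  -- bilinearity helpers
  have hEsub_left : ∀ x y z : L, x ∈ H → y ∈ H → z ∈ H →
      E (x - y) z = E x z - E y z := by
    intro x y z hx hy hz
    have h1 : x - y = x + (-1 : ℝ) • y := by
      rw [neg_one_smul]; abel
    rw [h1, hcf.add_left x ((-1:ℝ) • y) z hx (H.smul_mem _ hy) hz,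
      hcf.smul_left (-1) y z hy hz]
    ring
  have hEsub_right : ∀ x y z : L, x ∈ H → y ∈ H → z ∈ H →
      E z (x - y) = E z x - E z y := by
    intro x y z hx hy hz
    have h1 : x - y = x + (-1 : ℝ) • y := by
      rw [neg_one_smul]; abel
    rw [h1, hcf.add_right z x ((-1:ℝ) • y) hz hx (H.smul_mem _ hy),
      hcf.smul_right (-1) z y hz hy]
    ring
  have hQpar : ∀ x ∈ H, ∀ y ∈ H, Q (x - y) + Q (x + y) = 2 * Q x + 2 * Q y := by
    intro x hx y hy
    have hxy : x + y ∈ H := H.add_mem hx hy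
    have hxys : x - y ∈ H := H.sub_mem hx hy
    have e1 : E (x + y) (x + y) = E x x + E x y + E y x + E y y := by
      rw [hcf.add_left x y (x + y) hx hy hxy, hcf.add_right x x y hx hx hy,
        hcf.add_right y x y hy hx hy]
      ring
    have e2 : E (x - y) (x - y) = E x x - E x y - E y x + E y y := by
      rw [hEsub_left x y (x - y) hx hy hxys, hEsub_right x y x hx hy hx,
        hEsub_right x y y hx hy hy]
      ring
    simp only [hQdef]
    rw [e1, e2, real_inner_add_add_self, real_inner_sub_sub_self]
    ring
  have hQsmul : ∀ (c : ℝ) (w : L), w ∈ H → Q (c • w) = c ^ 2 * Q w := by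
    intro c w hw
    simp only [hQdef]
    rw [hcf.smul_left c w (c • w) hw (H.smul_mem c hw), hcf.smul_right c w w hw hw,
      real_inner_smul_left, real_inner_smul_right]
    ring
  -- Step 1 : eventual bound M
  obtain ⟨c, hc1, hc2⟩ := exists_between hlimsup
  have hev := Filter.eventually_lt_of_limsup_lt hc1
  have hcbot : c ≠ ⊥ := by
    rcases hev.exists with ⟨β, hβ⟩
    intro h
    rw [h] at hβ
    exact absurd hβ (by simp)
  set M := c.toReal with hM
  have hcM : c = (M : EReal) := (EReal.coe_toReal (ne_of_lt hc2) hcbot).symm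
  rw [hcM] at hev
  obtain ⟨β₁, hβ₁⟩ := eventually_atTop.mp hev
  have hMb : ∀ β ≥ β₁, β * ⟪u - β • G β u, u⟫ ≤ M := by
    intro β hβ
    exact le_of_lt (EReal.coe_lt_coe_iff.mp (hβ₁ β hβ))
  -- Step 2 : the sequence
  set β₂ : ℝ := max β₁ (2 * |α₀| + 1) with hβ₂
  set b : ℕ → ℝ := fun n => β₂ + n with hb
  have hbβ₁ : ∀ n, β₁ ≤ b n := fun n => by
    simp only [hb]
    have : β₁ ≤ β₂ := le_max_left _ _
    have : (0:ℝ) ≤ n := Nat.cast_nonneg n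
    linarith [le_max_left β₁ (2 * |α₀| + 1)]
  have hb1 : ∀ n, 1 ≤ b n := fun n => by
    simp only [hb]
    have h1 : 2 * |α₀| + 1 ≤ β₂ := le_max_right _ _
    have h2 : (0:ℝ) ≤ |α₀| := abs_nonneg _
    have : (0:ℝ) ≤ n := Nat.cast_nonneg n
    linarith
  have hbα : ∀ n, α₀ < b n := fun n => by
    simp only [hb]
    have h1 : 2 * |α₀| + 1 ≤ β₂ := le_max_right _ _
    have h2 : α₀ ≤ |α₀| := le_abs_self _
    have h3 : (0:ℝ) ≤ |α₀| := abs_nonneg _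
    have : (0:ℝ) ≤ n := Nat.cast_nonneg n
    linarith
  have hb2α : ∀ n, 2 * α₀ ≤ b n := fun n => by
    simp only [hb]
    have h1 : 2 * |α₀| + 1 ≤ β₂ := le_max_right _ _
    have h2 : α₀ ≤ |α₀| := le_abs_self _
    have : (0:ℝ) ≤ n := Nat.cast_nonneg n
    linarith
  set w : ℕ → L := fun n => (b n) • G (b n) u with hw
  have hwmem : ∀ n, w n ∈ H := fun n => H.smul_mem _ (hGmem _ (hbα n) u)
  -- Step 3 : key identity
  have hkey : ∀ n, b n * ⟪u - w n, u⟫ = b n * ‖u - w n‖ ^ 2 + E (w n) (w n) := by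
    intro n
    set β := b n with hβdef
    set g := G β u with hg
    have hgH : g ∈ H := hGmem β (hbα n) u
    have hres : E g g + β * ⟪g, g⟫ = ⟪u, g⟫ := hGeq β (hbα n) u g hgH
    have hE : E (w n) (w n) = β ^ 2 * E g g := by
      show E (β • g) (β • g) = _
      rw [hcf.smul_left β g (β • g) hgH (H.smul_mem β hgH),
        hcf.smul_right β g g hgH hgH]
      ring
    have h1 : ⟪u - w n, u⟫ = ⟪u, u⟫ - β * ⟪u, g⟫ := by
      show ⟪u - β • g, u⟫ = _
      rw [inner_sub_left, real_inner_smul_left, real_inner_comm g u]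
    have h2 : ‖u - w n‖ ^ 2 = ⟪u, u⟫ - 2 * (β * ⟪u, g⟫) + β ^ 2 * ⟪g, g⟫ := by
      show ‖u - β • g‖ ^ 2 = _
      rw [← hinn, real_inner_sub_sub_self, real_inner_smul_right,
        real_inner_smul_left, real_inner_smul_right, real_inner_comm g u]
      ring
    rw [h1, h2, hE]
    nlinarith [hres]
  have hnormw : ∀ n, ‖w n‖ ≤ 2 * ‖u‖ := by
    intro n
    have h := hGbd (b n) (hbα n) u
    rw [norm_smul, Real.norm_eq_abs, abs_of_pos (sub_pos.mpr (hbα n))] at h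
    have hwn : ‖w n‖ = b n * ‖G (b n) u‖ := by
      show ‖b n • _‖ = _
      rw [norm_smul, Real.norm_eq_abs,
        abs_of_pos (lt_of_lt_of_le one_pos (hb1 n))]
    have h2 : b n ≤ 2 * (b n - α₀) := by linarith [hb2α n]
    have hgn : (0:ℝ) ≤ ‖G (b n) u‖ := norm_nonneg _
    calc ‖w n‖ = b n * ‖G (b n) u‖ := hwn
      _ ≤ 2 * (b n - α₀) * ‖G (b n) u‖ := by
          apply mul_le_mul_of_nonneg_right h2 hgn
      _ = 2 * ((b n - α₀) * ‖G (b n) u‖) := by ring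
      _ ≤ 2 * ‖u‖ := by linarith
  set M₁ : ℝ := M + 4 * |α₀| * ‖u‖ ^ 2 with hM₁
  set R2 : ℝ := M + (|α₀| + 1) * (2 * ‖u‖) ^ 2 with hR2
  have hEbd : ∀ n, -(|α₀| * (2 * ‖u‖) ^ 2) ≤ E (w n) (w n) := by
    intro n
    have h0 := hcf.nonneg (w n) (hwmem n)
    have h1 := hinn (w n)
    have h2 : ‖w n‖ ^ 2 ≤ (2 * ‖u‖) ^ 2 := by
      have := hnormw n
      nlinarith [norm_nonneg (w n)]
    nlinarith [le_abs_self α₀, abs_nonneg α₀, sq_nonneg ‖w n‖]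
  have hdist1 : ∀ n, b n * ‖u - w n‖ ^ 2 ≤ M₁ := by
    intro n
    have hk := hkey n
    have hMn := hMb (b n) (hbβ₁ n)
    have hE := hEbd n
    simp only [hM₁]
    nlinarith [norm_nonneg u]
  have hdist2 : ∀ n, Q (w n) ≤ R2 := by
    intro n
    have hk := hkey n
    have hMn := hMb (b n) (hbβ₁ n)
    have hbn := hb1 n
    have hd : (0:ℝ) ≤ b n * ‖u - w n‖ ^ 2 := by
      have : (0:ℝ) < b n := lt_of_lt_of_le one_pos hbn
      positivity
    have h1 := hinn (w n)
    have h2 : ‖w n‖ ^ 2 ≤ (2 * ‖u‖) ^ 2 := by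
      have := hnormw n
      nlinarith [norm_nonneg (w n)]
    simp only [hQdef, hR2]
    nlinarith [le_abs_self α₀, abs_nonneg α₀, sq_nonneg ‖w n‖]
  have hM₁nn : (0:ℝ) ≤ M₁ := by
    refine le_trans ?_ (hdist1 0)
    have : (0:ℝ) < b 0 := lt_of_lt_of_le one_pos (hb1 0)
    positivity
  -- Step 4 : convex hulls of tails
  set S : ℕ → Set L := fun n => w '' {k | n ≤ k} with hS
  set T : ℕ → Set L := fun n => convexHull ℝ (S n) with hT
  have hTH : ∀ n, T n ⊆ (H : Set L) := by
    intro n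
    apply convexHull_min _ H.convex
    rintro x ⟨k, _, rfl⟩
    exact hwmem k
  have hTmono : ∀ m n : ℕ, n ≤ m → T m ⊆ T n := by
    intro m n h
    apply convexHull_mono
    apply Set.image_mono
    intro k hk
    exact le_trans h hk
  have hwT : ∀ n, w n ∈ T n := fun n =>
    subset_convexHull ℝ _ ⟨n, le_refl n, rfl⟩
  have hTconv : ∀ n, Convex ℝ (T n) := fun n => convex_convexHull ℝ _
  have hTball : ∀ n, ∀ x ∈ T n, ‖x - u‖ ≤ Real.sqrt (M₁ / b n) := by
    intro n
    have hbn : (0:ℝ) < b n := lt_of_lt_of_le one_pos (hb1 n)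
    have hsub : T n ⊆ Metric.closedBall u (Real.sqrt (M₁ / b n)) := by
      apply convexHull_min _ (convex_closedBall _ _)
      rintro x ⟨k, hk, rfl⟩
      rw [Metric.mem_closedBall, dist_eq_norm]
      have hbk : (0:ℝ) < b k := lt_of_lt_of_le one_pos (hb1 k)
      have h1 : ‖u - w k‖ ^ 2 ≤ M₁ / b k := by
        rw [le_div_iff₀ hbk]
        linarith [hdist1 k, mul_comm (b k) (‖u - w k‖ ^ 2)]
      have hbnk : b n ≤ b k := by
        simp only [hb]
        have : (n:ℝ) ≤ k := Nat.cast_le.mpr hk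
        linarith
      have h2 : M₁ / b k ≤ M₁ / b n := by
        apply div_le_div_of_nonneg_left hM₁nn hbn hbnk
      rw [norm_sub_rev]
      rw [show Real.sqrt (M₁ / b n) = Real.sqrt (M₁ / b n) from rfl]
      have h3 : ‖u - w k‖ ^ 2 ≤ M₁ / b n := le_trans h1 h2
      calc ‖u - w k‖ = Real.sqrt (‖u - w k‖ ^ 2) :=
            (Real.sqrt_sq (norm_nonneg _)).symm
        _ ≤ Real.sqrt (M₁ / b n) := Real.sqrt_le_sqrt h3
    intro x hx
    have := hsub hx
    rwa [Metric.mem_closedBall, dist_eq_norm] at this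
  -- Step 5 : infima
  set D : ℕ → ℝ := fun n => sInf (Q '' T n) with hD
  have hne : ∀ n, (Q '' T n).Nonempty := fun n => ⟨Q (w n), ⟨w n, hwT n, rfl⟩⟩
  have hbdd : ∀ n, BddBelow (Q '' T n) := by
    intro n
    refine ⟨0, ?_⟩
    rintro x ⟨y, hy, rfl⟩
    exact hQ0 y (hTH n hy)
  have hDmono : ∀ m n : ℕ, n ≤ m → D n ≤ D m := fun m n h =>
    csInf_le_csInf (hbdd n) (hne m) (Set.image_mono (hTmono m n h))
  have hDle : ∀ n, D n ≤ R2 := fun n =>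
    le_trans (csInf_le (hbdd n) ⟨w n, hwT n, rfl⟩) (hdist2 n)
  -- Step 6 : almost-minimizers
  have hchoice : ∀ n : ℕ, ∃ x ∈ T n, Q x < D n + 1 / ((n:ℝ) + 1) := by
    intro n
    have hpos : (0:ℝ) < 1 / ((n:ℝ) + 1) := by positivity
    have hlt : D n < D n + 1 / ((n:ℝ) + 1) := by linarith
    obtain ⟨y, ⟨x, hx, rfl⟩, hy⟩ := (csInf_lt_iff (hbdd n) (hne n)).mp hlt
    exact ⟨x, hx, hy⟩
  choose v hvT hvQ using hchoice
  have hvH : ∀ n, v n ∈ H := fun n => hTH n (hvT n)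
  -- Step 7 : Cauchy in Hnorm
  have hbddD : BddAbove (Set.range D) := by
    refine ⟨R2, ?_⟩
    rintro x ⟨n, rfl⟩
    exact hDle n
  set Ds : ℝ := ⨆ n, D n with hDs
  have hDleDs : ∀ n, D n ≤ Ds := fun n => le_ciSup hbddD n
  have hcauchy : ∀ ε > (0:ℝ), ∃ N : ℕ, ∀ m ≥ N, ∀ n ≥ N,
      Hnorm E α₀ (v m - v n) < ε := by
    intro ε hε
    set δ : ℝ := ε ^ 2 / 8 with hδ
    have hδpos : 0 < δ := by positivity
    obtain ⟨N₁, hN₁⟩ := exists_lt_of_lt_ciSup (show Ds - δ < ⨆ n, D n by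
      rw [← hDs]; linarith)
    obtain ⟨N₂, hN₂⟩ := exists_nat_gt (1 / δ)
    refine ⟨max N₁ N₂, ?_⟩
    intro m hm n hn
    have hsmall : ∀ j : ℕ, max N₁ N₂ ≤ j → 1 / ((j:ℝ) + 1) < δ := by
      intro j hj
      have h1 : (N₂:ℝ) ≤ j := Nat.cast_le.mpr (le_trans (le_max_right _ _) hj)
      have h2 : 1 / δ < (j:ℝ) + 1 := by linarith
      rw [div_lt_iff₀ (by positivity : (0:ℝ) < (j:ℝ) + 1)]
      have h3 : 1 < ((j:ℝ) + 1) * δ := (div_lt_iff₀ hδpos).mp h2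
      linarith [mul_comm ((j:ℝ) + 1) δ]
    set k := min m n with hk
    have hkN : N₁ ≤ k :=
      le_min (le_trans (le_max_left _ _) hm) (le_trans (le_max_left _ _) hn)
    have hDk : Ds - δ < D k := lt_of_lt_of_le hN₁ (hDmono k N₁ hkN)
    have hmid : (2⁻¹:ℝ) • v m + (2⁻¹:ℝ) • v n ∈ T k := by
      apply hTconv k (hTmono m k (min_le_left m n) (hvT m))
        (hTmono n k (min_le_right m n) (hvT n)) (by norm_num) (by norm_num)
        (by norm_num)
    have hDkmid : D k ≤ Q ((2⁻¹:ℝ) • v m + (2⁻¹:ℝ) • v n) :=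
      csInf_le (hbdd k) ⟨_, hmid, rfl⟩
    have hsum : Q (v m + v n) = 4 * Q ((2⁻¹:ℝ) • v m + (2⁻¹:ℝ) • v n) := by
      rw [← smul_add, hQsmul _ _ (H.add_mem (hvH m) (hvH n))]
      ring
    have hpar := hQpar (v m) (hvH m) (v n) (hvH n)
    have hQm := hvQ m
    have hQn := hvQ n
    have hDm := hDleDs m
    have hDn := hDleDs n
    have hsm := hsmall m hm
    have hsn := hsmall n hn
    have hQmn : Q (v m - v n) < ε ^ 2 := by
      have : Q (v m - v n) = 2 * Q (v m) + 2 * Q (v n) - Q (v m + v n) := by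
        linarith
      rw [this, hsum]
      have h8 : δ * 8 = ε ^ 2 := by rw [hδ]; ring
      linarith
    rw [hHnorm, Real.sqrt_lt' hε]
    exact hQmn
  -- Step 8 : limit in H
  obtain ⟨l, hlH, hlim⟩ := hcf.hilbert v hvH hcauchy
  have hvl : Tendsto v atTop (𝓝 l) := by
    rw [tendsto_iff_norm_sub_tendsto_zero]
    apply squeeze_zero (fun n => norm_nonneg _) _ hlim
    intro n
    have hmem : v n - l ∈ H := H.sub_mem (hvH n) hlH
    have h1 := hQge _ hmem
    rw [hHnorm]
    calc ‖v n - l‖ = Real.sqrt (‖v n - l‖ ^ 2) :=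
          (Real.sqrt_sq (norm_nonneg _)).symm
      _ ≤ Real.sqrt (Q (v n - l)) := Real.sqrt_le_sqrt h1
  -- Step 9 : v converges to u in L
  have hvu : Tendsto v atTop (𝓝 u) := by
    rw [tendsto_iff_norm_sub_tendsto_zero]
    apply squeeze_zero (fun n => norm_nonneg _)
      (fun n => hTball n (v n) (hvT n))
    have hdiv : Tendsto (fun n : ℕ => M₁ / b n) atTop (𝓝 0) := by
      apply Tendsto.div_atTop tendsto_const_nhds
      simp only [hb]
      exact tendsto_atTop_add_const_left _ _ tendsto_natCast_atTop_atTop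
    have := hdiv.sqrt
    simpa using this
  have huv : u = l := tendsto_nhds_unique hvu hvl
  rw [huv]
  exact hlH


end
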